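/- Define (α_j) by α_0=1, α_1=1/6, and α_j=(4/(5^j-5))Σ_{ℓ=1}^{j-1}α_{j-ℓ}α_ℓ for j≥2. Then for every real z ≥ 0, the series Σ_{j=0}^∞ α_j z^j converges (i.e., the power series with coefficients α_j has infinite radius of convergence). -/

import Mathlib

lemma alpha_aux_ineq : ∀ n : ℕ, 4 * (n + 1) * 2 ^ (n + 2) + 5 ≤ 5 ^ (n + 2) := by
  intro n
  induction n with
  | zero => norm_num
  | succ m ih =>
    have h1 : 4 * (m + 2) * 2 ^ (m + 3) + 5 ≤ 5 * (4 * (m + 1) * 2 ^ (m + 2) + 5) := by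
      ring_nf
      linarith [Nat.zero_le (m * 2 ^ m), Nat.zero_le (2 ^ m)]
    calc 4 * (m + 2) * 2 ^ (m + 3) + 5 ≤ 5 * (4 * (m + 1) * 2 ^ (m + 2) + 5) := h1
      _ ≤ 5 * 5 ^ (m + 2) := by omega
      _ = 5 ^ (m + 3) := by ring

lemma alpha_choose_le (j ℓ : ℕ) (h : ℓ < j + 1) : j.choose ℓ ≤ 2 ^ j := by
  calc j.choose ℓ ≤ ∑ m ∈ Finset.range (j + 1), j.choose m :=
        Finset.single_le_sum (fun i _ => Nat.zero_le _) (Finset.mem_range.mpr h)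
    _ = 2 ^ j := Nat.sum_range_choose j

lemma alpha_bound (α : ℕ → ℝ) (hα0 : α 0 = 1) (hα1 : α 1 = 1/6)
    (hαrec : ∀ j ≥ 2, α j = (4 / ((5:ℝ)^j - 5)) * ∑ ℓ ∈ Finset.Ico 1 j, α (j - ℓ) * α ℓ) :
    ∀ j : ℕ, 0 ≤ α j ∧ α j ≤ 1 / (j.factorial : ℝ) := by
  intro j
  induction j using Nat.strong_induction_on with
  | _ j ih =>
    match j with
    | 0 => simp [hα0]
    | 1 => norm_num [hα1]
    | (n + 2) =>
      set j := n + 2 with hj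
      have hjfac : (0:ℝ) < (j.factorial : ℝ) := by positivity
      have h5 : (5:ℝ) + 4 * (n + 1) * 2 ^ j ≤ 5 ^ j := by
        have := alpha_aux_ineq n
        have : ((4 * (n + 1) * 2 ^ (n + 2) + 5 : ℕ) : ℝ) ≤ ((5 ^ (n + 2) : ℕ) : ℝ) :=
          Nat.cast_le.mpr this
        push_cast at this
        linarith
      have h2pos : (0:ℝ) < 2 ^ j := by positivity
      have h5pos : (0:ℝ) < (5:ℝ) ^ j - 5 := by nlinarith
      -- bound on each term of the sum
      have hterm : ∀ ℓ ∈ Finset.Ico 1 j, α (j - ℓ) * α ℓ ≤ 2 ^ j / (j.factorial : ℝ) := by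
        intro ℓ hℓ
        rw [Finset.mem_Ico] at hℓ
        obtain ⟨hℓ1, hℓ2⟩ := hℓ
        have hA := ih (j - ℓ) (by omega)
        have hB := ih ℓ (by omega)
        have hfac1 : (0:ℝ) < ((j - ℓ).factorial : ℝ) := by positivity
        have hfac2 : (0:ℝ) < (ℓ.factorial : ℝ) := by positivity
        have step1 : α (j - ℓ) * α ℓ ≤ (1 / ((j - ℓ).factorial : ℝ)) * (1 / (ℓ.factorial : ℝ)) :=
          mul_le_mul hA.2 hB.2 hB.1 (by positivity)
        have hkey : (j.factorial : ℝ) ≤ 2 ^ j * (((j - ℓ).factorial : ℝ) * (ℓ.factorial : ℝ)) := by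
          have hch : j.choose ℓ * ℓ.factorial * (j - ℓ).factorial = j.factorial :=
            Nat.choose_mul_factorial_mul_factorial (by omega)
          have hle : j.choose ℓ ≤ 2 ^ j := alpha_choose_le j ℓ (by omega)
          have : j.factorial ≤ 2 ^ j * ((j - ℓ).factorial * ℓ.factorial) := by
            calc j.factorial = j.choose ℓ * ℓ.factorial * (j - ℓ).factorial := hch.symm
              _ ≤ 2 ^ j * ℓ.factorial * (j - ℓ).factorial :=
                  Nat.mul_le_mul_right _ (Nat.mul_le_mul_right _ hle)
              _ = 2 ^ j * ((j - ℓ).factorial * ℓ.factorial) := by ring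
          exact_mod_cast this
        have step2 : (1 / ((j - ℓ).factorial : ℝ)) * (1 / (ℓ.factorial : ℝ))
            ≤ 2 ^ j / (j.factorial : ℝ) := by
          rw [div_mul_div_comm, one_mul, div_le_div_iff₀ (by positivity) hjfac]
          nlinarith
        linarith
      have hsum_nonneg : 0 ≤ ∑ ℓ ∈ Finset.Ico 1 j, α (j - ℓ) * α ℓ := by
        apply Finset.sum_nonneg
        intro ℓ hℓ
        rw [Finset.mem_Ico] at hℓ
        exact mul_nonneg (ih (j - ℓ) (by omega)).1 (ih ℓ (by omega)).1
      have hsum_le : ∑ ℓ ∈ Finset.Ico 1 j, α (j - ℓ) * α ℓ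
          ≤ (n + 1 : ℝ) * (2 ^ j / (j.factorial : ℝ)) := by
        have hcard : (Finset.Ico 1 j).card = n + 1 := by
          rw [Nat.card_Ico]; omega
        calc ∑ ℓ ∈ Finset.Ico 1 j, α (j - ℓ) * α ℓ
            ≤ ∑ ℓ ∈ Finset.Ico 1 j, (2 ^ j / (j.factorial : ℝ)) := Finset.sum_le_sum hterm
          _ = (n + 1 : ℝ) * (2 ^ j / (j.factorial : ℝ)) := by
              rw [Finset.sum_const, hcard]; push_cast; ring
      have heq := hαrec j (by omega)
      constructor
      · rw [heq]
        exact mul_nonneg (by positivity) hsum_nonneg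
      · rw [heq]
        have h4 : (0:ℝ) < 4 / ((5:ℝ) ^ j - 5) := by positivity
        calc (4 / ((5:ℝ) ^ j - 5)) * ∑ ℓ ∈ Finset.Ico 1 j, α (j - ℓ) * α ℓ
            ≤ (4 / ((5:ℝ) ^ j - 5)) * ((n + 1 : ℝ) * (2 ^ j / (j.factorial : ℝ))) :=
              mul_le_mul_of_nonneg_left hsum_le (le_of_lt h4)
          _ ≤ 1 / (j.factorial : ℝ) := by
              rw [div_mul_eq_mul_div, div_le_div_iff₀ h5pos hjfac]
              have : 4 * ((n + 1 : ℝ) * (2 ^ j / (j.factorial : ℝ))) * (j.factorial : ℝ)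
                  = 4 * (n + 1) * 2 ^ j := by
                field_simp
              rw [this]
              nlinarith

theorem alpha_series_entire (α : ℕ → ℝ) (hα0 : α 0 = 1) (hα1 : α 1 = 1/6)
    (hαrec : ∀ j ≥ 2, α j = (4 / ((5:ℝ)^j - 5)) * ∑ ℓ ∈ Finset.Ico 1 j, α (j - ℓ) * α ℓ) :
    ∀ z : ℝ, 0 ≤ z → Summable (fun j : ℕ => α j * z ^ j) := by
  intro z hz
  have hb := alpha_bound α hα0 hα1 hαrec
  apply Summable.of_nonneg_of_le
    (fun j => mul_nonneg (hb j).1 (pow_nonneg hz j))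
    (fun j => ?_) (Real.summable_pow_div_factorial z)
  calc α j * z ^ j ≤ (1 / (j.factorial : ℝ)) * z ^ j :=
        mul_le_mul_of_nonneg_right (hb j).2 (pow_nonneg hz j)
    _ = z ^ j / (j.factorial : ℝ) := by ring
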